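/- If (X_1,...,X_n) has the MVG distribution with parameters \theta_I, \emptyset \ne I \subseteq {1,...,n}, then for every nonempty subset {l_1,...,l_s} \subseteq {1,...,n}, the subvector (X_{l_1},...,X_{l_s}) has the MVG distribution with parameters \hat\theta_I = \prod_{\tilde I \subseteq {1,...,n} \setminus {l_1,...,l_s}} \theta_{I \cup \tilde I} for nonempty I \subseteq {l_1,...,l_s} (the product including \tilde I = \emptyset). -/

import Mathlib

open MeasureTheory ProbabilityTheory
open scoped ENNReal

/-- The components of a multivariate geometric (MVG) vector: `X_i = min {M_I : I ∋ i}`. -/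
noncomputable def mvgX {Ω : Type*} {n : ℕ}
    (M : {I : Finset (Fin n) // I.Nonempty} → Ω → ℕ) (i : Fin n) (ω : Ω) : ℕ :=
  sInf {x | ∃ I : {I : Finset (Fin n) // I.Nonempty}, i ∈ I.1 ∧ M I ω = x}

/-- The subvector `(X_l)_{l ∈ L}` of an MVG vector is MVG with parameters
`θ̂_I = ∏_{Ĩ ⊆ {1,...,n} \ L} θ_{I ∪ Ĩ}` for `∅ ≠ I ⊆ L`: its joint survival function
has the corresponding MVG product form. -/
theorem stmt15 {Ω : Type*} [MeasurableSpace Ω] (μ : Measure Ω) [IsProbabilityMeasure μ]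
    {n : ℕ} (θ : Finset (Fin n) → ℝ≥0∞) (hθ : ∀ I, θ I ≤ 1)
    (M : {I : Finset (Fin n) // I.Nonempty} → Ω → ℕ)
    (hM : ∀ I, Measurable (M I))
    (hindep : iIndepFun M μ)
    (hgeo : ∀ (I : {I : Finset (Fin n) // I.Nonempty}) (k : ℕ),
      μ {ω | k < M I ω} = θ I.1 ^ (k + 1))
    (hnondef : ∀ i : Fin n, ∃ I : Finset (Fin n), i ∈ I ∧ θ I < 1)
    (L : Finset (Fin n)) (hL : L.Nonempty)
    (k : Fin n → ℤ) (hk : ∀ i, -1 ≤ k i) :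
    μ {ω | ∀ i ∈ L, k i < (mvgX M i ω : ℤ)}
      = ∏ I ∈ Finset.univ.powerset.filter (fun I : Finset (Fin n) => I ⊆ L ∧ I.Nonempty),
          (∏ J ∈ ((Finset.univ : Finset (Fin n)) \ L).powerset, θ (I ∪ J))
            ^ (I.sup fun i => (k i + 1).toNat) := by
  classical
  set e : Fin n → ℕ := fun i => (k i + 1).toNat with he
  set m : {I : Finset (Fin n) // I.Nonempty} → ℕ := fun I => (I.1 ∩ L).sup e with hm
  -- Step 1: rewrite the event as an intersection of preimages
  have hset : {ω | ∀ i ∈ L, k i < (mvgX M i ω : ℤ)}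
      = ⋂ I : {I : Finset (Fin n) // I.Nonempty}, (M I) ⁻¹' (Set.Ici (m I)) := by
    ext ω
    simp only [Set.mem_setOf_eq, Set.mem_iInter, Set.mem_preimage, Set.mem_Ici]
    constructor
    · intro h I
      rw [hm, Finset.sup_le_iff]
      intro i hi
      rw [Finset.mem_inter] at hi
      have h1 := h i hi.2
      have h2 : mvgX M i ω ≤ M I ω := Nat.sInf_le ⟨I, hi.1, rfl⟩
      have h3 : k i < (M I ω : ℤ) := lt_of_lt_of_le h1 (by exact_mod_cast h2)
      simp only [he]
      omega
    · intro h i hi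
      have hne : {x | ∃ I : {I : Finset (Fin n) // I.Nonempty}, i ∈ I.1 ∧ M I ω = x}.Nonempty :=
        ⟨M ⟨{i}, Finset.singleton_nonempty i⟩ ω, ⟨_, Finset.mem_singleton_self i, rfl⟩⟩
      obtain ⟨I, hiI, hIx⟩ := Nat.sInf_mem hne
      have h4 : e i ≤ m I := Finset.le_sup (Finset.mem_inter.2 ⟨hiI, hi⟩)
      have h5 : e i ≤ M I ω := le_trans h4 (h I)
      have h6 : mvgX M i ω = M I ω := hIx.symm
      rw [h6]
      simp only [he] at h5
      omega
  -- Step 2: measure of the intersection via independence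
  have hprod : μ (⋂ I : {I : Finset (Fin n) // I.Nonempty}, (M I) ⁻¹' (Set.Ici (m I)))
      = ∏ I : {I : Finset (Fin n) // I.Nonempty}, μ ((M I) ⁻¹' (Set.Ici (m I))) :=
    hindep.meas_iInter fun I => ⟨Set.Ici (m I), measurableSet_Ici, rfl⟩
  have hval : ∀ I : {I : Finset (Fin n) // I.Nonempty},
      μ ((M I) ⁻¹' (Set.Ici (m I))) = θ I.1 ^ (m I) := by
    intro I
    cases hmi : m I with
    | zero =>
      have : (M I) ⁻¹' (Set.Ici 0) = Set.univ := by
        ext ω; simp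
      rw [this, measure_univ, pow_zero]
    | succ j =>
      have : (M I) ⁻¹' (Set.Ici (j + 1)) = {ω | j < M I ω} := by
        ext ω; simp [Nat.succ_le_iff]
      rw [this, hgeo I j]
  rw [hset, hprod]
  simp only [hval]
  -- Step 3: combinatorial identity
  have hsub : (∏ I : {I : Finset (Fin n) // I.Nonempty}, θ I.1 ^ (m I))
      = ∏ I ∈ Finset.univ.powerset.filter (fun I : Finset (Fin n) => I.Nonempty),
          θ I ^ ((I ∩ L).sup e) := by
    exact (Finset.prod_subtype (Finset.univ.powerset.filter (fun I : Finset (Fin n) => I.Nonempty))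
      (p := fun I => I.Nonempty) (fun I => by simp) (fun I => θ I ^ ((I ∩ L).sup e))).symm
  rw [hsub]
  -- restrict to sets meeting L
  have hrestrict : (∏ I ∈ Finset.univ.powerset.filter (fun I : Finset (Fin n) => I.Nonempty),
          θ I ^ ((I ∩ L).sup e))
      = ∏ I ∈ Finset.univ.powerset.filter
          (fun I : Finset (Fin n) => I.Nonempty ∧ (I ∩ L).Nonempty),
          θ I ^ ((I ∩ L).sup e) := by
    refine (Finset.prod_subset ?_ ?_).symm
    · intro I hI
      simp only [Finset.mem_filter] at hI ⊢
      exact ⟨hI.1, hI.2.1⟩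
    · intro I hI hI2
      simp only [Finset.mem_filter] at hI hI2
      have : I ∩ L = ∅ := by
        by_contra hc
        exact hI2 ⟨hI.1, hI.2, Finset.nonempty_of_ne_empty hc⟩
      rw [this]
      simp
  rw [hrestrict]
  -- bijection with pairs (A, J)
  rw [show (∏ I ∈ Finset.univ.powerset.filter (fun I : Finset (Fin n) => I ⊆ L ∧ I.Nonempty),
          (∏ J ∈ ((Finset.univ : Finset (Fin n)) \ L).powerset, θ (I ∪ J))
            ^ (I.sup e))
      = ∏ p ∈ (Finset.univ.powerset.filter (fun I : Finset (Fin n) => I ⊆ L ∧ I.Nonempty)) ×ˢ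
          ((Finset.univ : Finset (Fin n)) \ L).powerset, θ (p.1 ∪ p.2) ^ (p.1.sup e) from ?_]
  · refine Finset.prod_nbij' (fun I => (I ∩ L, I \ L)) (fun p => p.1 ∪ p.2) ?_ ?_ ?_ ?_ ?_
    · intro I hI
      simp only [Finset.mem_filter, Finset.mem_powerset, Finset.mem_product] at hI ⊢
      refine ⟨⟨Finset.subset_univ _, Finset.inter_subset_right, hI.2.2⟩, ?_⟩
      intro x hx
      simp only [Finset.mem_sdiff] at hx ⊢
      exact ⟨Finset.mem_univ x, hx.2⟩
    · intro p hp
      simp only [Finset.mem_filter, Finset.mem_powerset, Finset.mem_product] at hp ⊢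
      obtain ⟨⟨-, hAL, hAne⟩, hJ⟩ := hp
      have hAinter : (p.1 ∪ p.2) ∩ L = p.1 := by
        rw [Finset.union_inter_distrib_right]
        rw [Finset.inter_eq_left.2 hAL]
        have : p.2 ∩ L = ∅ := by
          rw [Finset.eq_empty_iff_forall_notMem]
          intro x hx
          rw [Finset.mem_inter] at hx
          have := hJ hx.1
          rw [Finset.mem_sdiff] at this
          exact this.2 hx.2
        rw [this, Finset.union_empty]
      exact ⟨Finset.subset_univ _, hAne.inl, by rw [hAinter]; exact hAne⟩
    · intro I hI
      exact (Finset.union_comm _ _).trans (Finset.sdiff_union_inter I L)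
    · intro p hp
      simp only [Finset.mem_filter, Finset.mem_powerset, Finset.mem_product] at hp
      obtain ⟨⟨-, hAL, hAne⟩, hJ⟩ := hp
      have h1 : (p.1 ∪ p.2) ∩ L = p.1 := by
        rw [Finset.union_inter_distrib_right, Finset.inter_eq_left.2 hAL]
        have : p.2 ∩ L = ∅ := by
          rw [Finset.eq_empty_iff_forall_notMem]
          intro x hx
          rw [Finset.mem_inter] at hx
          have := hJ hx.1
          rw [Finset.mem_sdiff] at this
          exact this.2 hx.2
        rw [this, Finset.union_empty]
      have h2 : (p.1 ∪ p.2) \ L = p.2 := by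
        rw [Finset.union_sdiff_distrib]
        have hA : p.1 \ L = ∅ := Finset.sdiff_eq_empty_iff_subset.2 hAL
        have hJ2 : p.2 \ L = p.2 := by
          rw [Finset.sdiff_eq_self_iff_disjoint]
          rw [Finset.disjoint_left]
          intro x hx
          have := hJ hx
          rw [Finset.mem_sdiff] at this
          exact this.2
        rw [hA, hJ2, Finset.empty_union]
      rw [Prod.ext_iff]
      exact ⟨h1, h2⟩
    · intro I hI
      congr 2
      exact ((Finset.union_comm _ _).trans (Finset.sdiff_union_inter I L)).symm
  · rw [Finset.prod_product]
    refine Finset.prod_congr ?_ (fun A hA => ?_)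
    · ext I; simp [and_comm]
    · rw [← Finset.prod_pow]
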